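/- Suppose k is an integral domain, 4 − δ² is invertible in k, and [n] ≠ 0 in k for all n ≥ 1 (so that the representation is a faithful representation of the infinite dihedral group). Then the subring of k[αs, αt] consisting of polynomials fixed by both σs and σt is exactly the k-subalgebra generated by the single element z := αs² + δ·αs·αt + αt². -/

import Mathlib

open MvPolynomial

/-- The quantum numbers `[n] ∈ k` attached to `δ ∈ k`:
`[0] = 0`, `[1] = 1`, `[n+1] = δ·[n] − [n−1]`. -/
def qn {k : Type*} [CommRing k] (δ : k) : ℕ → k
  | 0 => 0
  | 1 => 1
  | n + 2 => δ * qn δ (n + 1) - qn δ n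

/-- The involution `σs` of `R = k[αs, αt]` (with `αs = X 0`, `αt = X 1`) determined by
`σs(αs) = −αs`, `σs(αt) = αt + δ·αs`. -/
noncomputable def σs {k : Type*} [CommRing k] (δ : k) :
    MvPolynomial (Fin 2) k →ₐ[k] MvPolynomial (Fin 2) k :=
  aeval ![-(X 0), X 1 + C δ * X 0]

/-- The involution `σt` of `R = k[αs, αt]` determined by
`σt(αt) = −αt`, `σt(αs) = αs + δ·αt`. -/
noncomputable def σt {k : Type*} [CommRing k] (δ : k) :
    MvPolynomial (Fin 2) k →ₐ[k] MvPolynomial (Fin 2) k :=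
  aeval ![X 0 + C δ * X 1, -(X 1)]

lemma qn_map {k K : Type*} [CommRing k] [CommRing K] (φ : k →+* K) (δ : k) :
    ∀ n, φ (qn δ n) = qn (φ δ) n
  | 0 => by simp [qn]
  | 1 => by simp [qn]
  | n + 2 => by
    rw [qn, qn, map_sub, map_mul, qn_map φ δ (n + 1), qn_map φ δ n]

lemma pow_sub_pow_eq {K : Type*} [CommRing K] (μ ν d : K) (hadd : μ + ν = d)
    (hmul : μ * ν = 1) : ∀ n, μ ^ n - ν ^ n = (μ - ν) * qn d n
  | 0 => by simp [qn]
  | 1 => by simp [qn]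
  | n + 2 => by
    have e1 := pow_sub_pow_eq μ ν d hadd hmul (n + 1)
    have e2 := pow_sub_pow_eq μ ν d hadd hmul n
    have key : μ ^ (n + 2) - ν ^ (n + 2)
        = (μ + ν) * (μ ^ (n + 1) - ν ^ (n + 1)) - (μ * ν) * (μ ^ n - ν ^ n) := by ring
    rw [key, hadd, hmul, e1, e2, qn]
    ring

lemma monomial_fin2 {R : Type*} [CommRing R] (d : Fin 2 →₀ ℕ) (c : R) :
    (monomial d c : MvPolynomial (Fin 2) R) = C c * X 0 ^ d 0 * X 1 ^ d 1 := by
  rw [monomial_eq, Finsupp.prod_fintype _ _ (fun i => pow_zero _), Fin.prod_univ_two]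
  ring

lemma single0_eq_iff (d : Fin 2 →₀ ℕ) (n : ℕ) :
    d = Finsupp.single 0 n ↔ d 0 = n ∧ d 1 = 0 := by
  constructor
  · rintro rfl; simp
  · rintro ⟨h0, h1⟩
    ext i
    fin_cases i <;> simp [h0, h1]

lemma psi_coeff {R : Type*} [CommRing R] (f : MvPolynomial (Fin 2) R) (n : ℕ) :
    (aeval ![Polynomial.X, 0] f : Polynomial R).coeff n
      = coeff (Finsupp.single 0 n) f := by
  induction f using MvPolynomial.induction_on' with
  | monomial d c =>
    have hL : (aeval ![Polynomial.X, 0] (monomial d c) : Polynomial R)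
        = Polynomial.C c * Polynomial.X ^ d 0 * 0 ^ d 1 := by
      rw [monomial_fin2]
      simp [aeval_C, Polynomial.algebraMap_eq]
    rw [hL, coeff_monomial]
    by_cases hb : d 1 = 0
    · rw [hb, pow_zero, mul_one, Polynomial.coeff_C_mul, Polynomial.coeff_X_pow]
      by_cases h0 : d 0 = n
      · rw [if_pos h0.symm, if_pos ((single0_eq_iff d n).mpr ⟨h0, hb⟩), mul_one]
      · rw [if_neg (fun h => h0 h.symm), if_neg (fun h => h0 ((single0_eq_iff d n).mp h).1), mul_zero]
    · rw [zero_pow hb, mul_zero, Polynomial.coeff_zero,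
        if_neg (fun h => hb ((single0_eq_iff d n).mp h).2)]
  | add p q hp hq => simp [map_add, coeff_add, hp, hq]

lemma coeff_z_pow {K : Type*} [CommRing K] (δ : K) (m j : ℕ) :
    coeff (Finsupp.single 0 (2 * m))
      ((X 0 ^ 2 + C δ * (X 0 * X 1) + X 1 ^ 2 : MvPolynomial (Fin 2) K) ^ j)
      = if j = m then 1 else 0 := by
  rw [← psi_coeff, map_pow]
  have hz : (aeval ![Polynomial.X, 0]
      (X 0 ^ 2 + C δ * (X 0 * X 1) + X 1 ^ 2 : MvPolynomial (Fin 2) K) : Polynomial K)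
      = Polynomial.X ^ 2 := by
    simp [aeval_C]
  rw [hz, ← pow_mul, Polynomial.coeff_X_pow]
  exact if_congr (by omega) rfl rfl

lemma aeval_diag_monomial {K : Type*} [CommRing K] (a b : K) (d : Fin 2 →₀ ℕ) (c : K) :
    aeval ![C a * X 0, C b * X 1] (monomial d c)
      = (monomial d (c * a ^ d 0 * b ^ d 1) : MvPolynomial (Fin 2) K) := by
  rw [monomial_fin2, monomial_fin2]
  simp only [map_mul, map_pow, aeval_X, aeval_C, Matrix.cons_val_zero, Matrix.cons_val_one,
    Matrix.head_cons, algebraMap_eq]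
  ring

lemma coeff_diag {K : Type*} [CommRing K] (a b : K) (g : MvPolynomial (Fin 2) K)
    (d : Fin 2 →₀ ℕ) :
    coeff d (aeval ![C a * X 0, C b * X 1] g) = a ^ d 0 * b ^ d 1 * coeff d g := by
  induction g using MvPolynomial.induction_on' with
  | monomial e c =>
    rw [aeval_diag_monomial, coeff_monomial, coeff_monomial]
    split_ifs with h
    · subst h; ring
    · ring
  | add p q hp hq => rw [map_add, coeff_add, coeff_add, hp, hq, mul_add]

set_option maxHeartbeats 1000000 in
lemma descent {k K : Type*} [CommRing k] [CommRing K] (φ : k →+* K)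
    (hφ : Function.Injective φ) (δ : k) :
    ∀ (n : ℕ) (p : Polynomial K) (f : MvPolynomial (Fin 2) k),
      p.natDegree ≤ n →
      MvPolynomial.map φ f
        = Polynomial.aeval (X 0 ^ 2 + C (φ δ) * (X 0 * X 1) + X 1 ^ 2 :
            MvPolynomial (Fin 2) K) p →
      f ∈ Algebra.adjoin k
          ({X 0 ^ 2 + C δ * (X 0 * X 1) + X 1 ^ 2} : Set (MvPolynomial (Fin 2) k)) := by
  have key : ∀ (p : Polynomial K) (d : ℕ),
      coeff (Finsupp.single 0 (2 * d))
        (Polynomial.aeval (X 0 ^ 2 + C (φ δ) * (X 0 * X 1) + X 1 ^ 2 :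
            MvPolynomial (Fin 2) K) p) = p.coeff d := by
    intro p d
    rw [Polynomial.aeval_eq_sum_range, coeff_sum]
    simp only [coeff_smul, coeff_z_pow, smul_eq_mul, mul_ite, mul_one, mul_zero]
    rw [Finset.sum_ite_eq' (Finset.range (p.natDegree + 1))]
    split_ifs with h
    · rfl
    · rw [Finset.mem_range, not_lt] at h
      exact (Polynomial.coeff_eq_zero_of_natDegree_lt (by omega)).symm
  intro n
  induction n with
  | zero =>
    intro p f hdeg heq
    rw [Polynomial.eq_C_of_natDegree_le_zero hdeg] at heq
    have h0 : φ (coeff 0 f) = p.coeff 0 := by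
      have := congrArg (coeff (0 : Fin 2 →₀ ℕ)) heq
      rwa [coeff_map, Polynomial.aeval_C, algebraMap_eq, coeff_C] at this
    have : MvPolynomial.map φ f = MvPolynomial.map φ (C (coeff 0 f)) := by
      rw [heq, map_C, h0, Polynomial.aeval_C, algebraMap_eq]
    rw [MvPolynomial.map_injective φ hφ this]
    exact Subalgebra.algebraMap_mem _ _
  | succ n ih =>
    intro p f hdeg heq
    rcases le_or_gt p.natDegree n with h | h
    · exact ih p f h heq
    have hd : p.natDegree = n + 1 := le_antisymm hdeg h
    set a : k := coeff (Finsupp.single 0 (2 * (n + 1))) f with ha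
    have hφa : φ a = p.coeff (n + 1) := by
      have := congrArg (coeff (Finsupp.single 0 (2 * (n + 1)))) heq
      rwa [coeff_map, key] at this
    set z : MvPolynomial (Fin 2) k := X 0 ^ 2 + C δ * (X 0 * X 1) + X 1 ^ 2 with hz
    set zK : MvPolynomial (Fin 2) K := X 0 ^ 2 + C (φ δ) * (X 0 * X 1) + X 1 ^ 2 with hzK
    have hmapz : MvPolynomial.map φ z = zK := by
      simp [hz, hzK, map_add, map_mul, map_pow]
    have hstep : MvPolynomial.map φ (f - C a * z ^ (n + 1))
        = Polynomial.aeval zK p.eraseLead := by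
      have hsplit := Polynomial.eraseLead_add_C_mul_X_pow p
      have := congrArg (Polynomial.aeval zK) hsplit
      rw [map_add, map_mul, Polynomial.aeval_C, Polynomial.aeval_X_pow, algebraMap_eq,
        Polynomial.leadingCoeff, hd] at this
      rw [map_sub, map_mul, map_pow, hmapz, map_C, heq, hφa, ← this]
      ring
    have hmem := ih p.eraseLead (f - C a * z ^ (n + 1))
      (by have := Polynomial.eraseLead_natDegree_le p; omega) hstep
    have : f = (f - C a * z ^ (n + 1)) + C a * z ^ (n + 1) := by ring
    rw [this]
    have hz_mem : z ∈ Algebra.adjoin k ({z} : Set (MvPolynomial (Fin 2) k)) :=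
      Algebra.subset_adjoin (Set.mem_singleton z)
    have hCa : (C a : MvPolynomial (Fin 2) k) ∈
        Algebra.adjoin k ({z} : Set (MvPolynomial (Fin 2) k)) := by
      rw [← algebraMap_eq]
      exact Subalgebra.algebraMap_mem _ _
    exact add_mem hmem (mul_mem hCa (pow_mem hz_mem _))

lemma map_σs {k K : Type*} [CommRing k] [CommRing K] (φ : k →+* K) (δ : k)
    (f : MvPolynomial (Fin 2) k) :
    MvPolynomial.map φ (σs δ f) = σs (φ δ) (MvPolynomial.map φ f) := by
  have h : (MvPolynomial.map φ).comp (σs δ).toRingHom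
      = (σs (φ δ)).toRingHom.comp (MvPolynomial.map φ) := by
    apply MvPolynomial.ringHom_ext
    · intro a
      simp [σs, aeval_C, algebraMap_eq]
    · intro i
      fin_cases i <;>
        simp [σs, aeval_X, map_neg, map_add, map_mul]
  exact DFunLike.congr_fun h f

lemma map_σt {k K : Type*} [CommRing k] [CommRing K] (φ : k →+* K) (δ : k)
    (f : MvPolynomial (Fin 2) k) :
    MvPolynomial.map φ (σt δ f) = σt (φ δ) (MvPolynomial.map φ f) := by
  have h : (MvPolynomial.map φ).comp (σt δ).toRingHom
      = (σt (φ δ)).toRingHom.comp (MvPolynomial.map φ) := by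
    apply MvPolynomial.ringHom_ext
    · intro a
      simp [σt, aeval_C, algebraMap_eq]
    · intro i
      fin_cases i <;>
        simp [σt, aeval_X, map_neg, map_add, map_mul]
  exact DFunLike.congr_fun h f

lemma σs_fix_z {k : Type*} [CommRing k] (δ : k) :
    σs δ (X 0 ^ 2 + C δ * (X 0 * X 1) + X 1 ^ 2 : MvPolynomial (Fin 2) k)
      = X 0 ^ 2 + C δ * (X 0 * X 1) + X 1 ^ 2 := by
  simp only [σs, map_add, map_mul, map_pow, aeval_X, aeval_C, algebraMap_eq,
    Matrix.cons_val_zero, Matrix.cons_val_one, Matrix.head_cons]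
  ring

lemma σt_fix_z {k : Type*} [CommRing k] (δ : k) :
    σt δ (X 0 ^ 2 + C δ * (X 0 * X 1) + X 1 ^ 2 : MvPolynomial (Fin 2) k)
      = X 0 ^ 2 + C δ * (X 0 * X 1) + X 1 ^ 2 := by
  simp only [σt, map_add, map_mul, map_pow, aeval_X, aeval_C, algebraMap_eq,
    Matrix.cons_val_zero, Matrix.cons_val_one, Matrix.head_cons]
  ring

set_option maxHeartbeats 400000 in
lemma core {K : Type*} [Field K] [IsAlgClosed K] (δ : K) (h4 : (4 : K) - δ ^ 2 ≠ 0)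
    (hq : ∀ n : ℕ, 1 ≤ n → qn δ n ≠ 0) (F : MvPolynomial (Fin 2) K)
    (hF : σt δ (σs δ F) = F) :
    F ∈ Algebra.adjoin K
      ({X 0 ^ 2 + C δ * (X 0 * X 1) + X 1 ^ 2} : Set (MvPolynomial (Fin 2) K)) := by
  -- find the eigenvalue parameter μ
  obtain ⟨μ, hroot⟩ : ∃ μ : K, μ ^ 2 - δ * μ + 1 = 0 := by
    have h2 : (Polynomial.X ^ 2 - Polynomial.C δ * Polynomial.X + 1 : Polynomial K)
        = Polynomial.C 1 * Polynomial.X ^ 2 + Polynomial.C (-δ) * Polynomial.X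
          + Polynomial.C 1 := by
      simp only [map_one, map_neg, one_mul]
      ring
    have hdeg : (Polynomial.X ^ 2 - Polynomial.C δ * Polynomial.X + 1 :
        Polynomial K).degree ≠ 0 := by
      rw [h2, Polynomial.degree_quadratic one_ne_zero]
      simp
    obtain ⟨μ, hμ⟩ := IsAlgClosed.exists_root _ hdeg
    refine ⟨μ, ?_⟩
    have h3 := hμ
    simp only [Polynomial.IsRoot, Polynomial.eval_add, Polynomial.eval_sub,
      Polynomial.eval_mul, Polynomial.eval_pow, Polynomial.eval_X, Polynomial.eval_C,
      Polynomial.eval_one] at h3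
    exact h3
  obtain ⟨ν, hν⟩ : ∃ ν : K, ν = δ - μ := ⟨_, rfl⟩
  have hνroot : ν ^ 2 - δ * ν + 1 = 0 := by rw [hν]; linear_combination hroot
  have hmul : μ * ν = 1 := by rw [hν]; linear_combination -hroot
  have hadd : μ + ν = δ := by rw [hν]; ring
  have hμ0 : μ ≠ 0 := fun h => by
    rw [h, zero_mul] at hmul; exact zero_ne_one hmul
  have hν0 : ν ≠ 0 := fun h => by
    rw [h, mul_zero] at hmul; exact zero_ne_one hmul
  have hdiff : μ - ν ≠ 0 := by
    intro h
    exact h4 (by linear_combination (-4) * hmul + (μ + ν + δ) * hadd + (-(μ - ν)) * h)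
  have hμν : ∀ m : ℕ, μ ^ m * ν ^ m = 1 := fun m => by rw [← mul_pow, hmul, one_pow]
  have hlam : ∀ m : ℕ, 1 ≤ m → μ ^ (2 * m) ≠ 1 := by
    intro m hm h1
    have hs := pow_sub_pow_eq μ ν δ hadd hmul m
    have hfact : μ ^ (2 * m) - 1 = μ ^ m * ((μ - ν) * qn δ m) := by
      rw [← hs, two_mul, pow_add, ← hμν m]; ring
    rw [h1, sub_self] at hfact
    exact mul_ne_zero (pow_ne_zero m hμ0) (mul_ne_zero hdiff (hq m hm)) hfact.symm
  -- constants in the polynomial ring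
  have hμC : (C μ : MvPolynomial (Fin 2) K) ^ 2 - C δ * C μ + 1 = 0 := by
    have h := congrArg (C : K → MvPolynomial (Fin 2) K) hroot
    simpa only [map_add, map_sub, map_mul, map_pow, map_one, map_zero] using h
  have hνC : (C ν : MvPolynomial (Fin 2) K) ^ 2 - C δ * C ν + 1 = 0 := by
    have h := congrArg (C : K → MvPolynomial (Fin 2) K) hνroot
    simpa only [map_add, map_sub, map_mul, map_pow, map_one, map_zero] using h
  have haddC : (C μ : MvPolynomial (Fin 2) K) + C ν = C δ := by
    have h := congrArg (C : K → MvPolynomial (Fin 2) K) hadd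
    simpa only [map_add] using h
  have hmulC : (C μ : MvPolynomial (Fin 2) K) * C ν = 1 := by
    have h := congrArg (C : K → MvPolynomial (Fin 2) K) hmul
    simpa only [map_mul, map_one] using h
  obtain ⟨e, he⟩ : ∃ e : K, e = (μ - ν)⁻¹ := ⟨_, rfl⟩
  have hE : (C e : MvPolynomial (Fin 2) K) * C μ - C e * C ν = 1 := by
    have h1 : e * μ - e * ν = 1 := by
      have := inv_mul_cancel₀ hdiff
      rw [he]; linear_combination this
    have h := congrArg (C : K → MvPolynomial (Fin 2) K) h1
    simpa only [map_sub, map_mul, map_one] using h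
  -- the linear change of variables
  obtain ⟨Ψ, hΨdef⟩ : ∃ Ψ : MvPolynomial (Fin 2) K →ₐ[K] MvPolynomial (Fin 2) K,
      Ψ = aeval ![X 0 + C μ * X 1, X 0 + C ν * X 1] := ⟨_, rfl⟩
  obtain ⟨Φ, hΦdef⟩ : ∃ Φ : MvPolynomial (Fin 2) K →ₐ[K] MvPolynomial (Fin 2) K,
      Φ = aeval ![C e * C μ * X 1 - C e * C ν * X 0, C e * X 0 - C e * X 1] := ⟨_, rfl⟩
  have hΨΦ : Ψ.comp Φ = AlgHom.id K (MvPolynomial (Fin 2) K) := by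
    apply MvPolynomial.algHom_ext
    intro i
    fin_cases i
    · simp only [hΨdef, hΦdef, AlgHom.comp_apply, AlgHom.id_apply, aeval_X,
        Matrix.cons_val_zero, Matrix.cons_val_one, Matrix.head_cons, Fin.zero_eta, Fin.mk_one, map_sub, map_mul,
        aeval_C, algebraMap_eq, Fin.isValue]
      linear_combination (X 0 : MvPolynomial (Fin 2) K) * hE
    · simp only [hΨdef, hΦdef, AlgHom.comp_apply, AlgHom.id_apply, aeval_X,
        Matrix.cons_val_zero, Matrix.cons_val_one, Matrix.head_cons, Fin.zero_eta, Fin.mk_one, map_sub, map_mul,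
        aeval_C, algebraMap_eq, Fin.isValue]
      linear_combination (X 1 : MvPolynomial (Fin 2) K) * hE
  have hΦΨ : Φ.comp Ψ = AlgHom.id K (MvPolynomial (Fin 2) K) := by
    apply MvPolynomial.algHom_ext
    intro i
    fin_cases i
    · simp only [hΨdef, hΦdef, AlgHom.comp_apply, AlgHom.id_apply, aeval_X,
        Matrix.cons_val_zero, Matrix.cons_val_one, Matrix.head_cons, Fin.zero_eta, Fin.mk_one, map_add, map_mul,
        aeval_C, algebraMap_eq, Fin.isValue]
      linear_combination (X 0 : MvPolynomial (Fin 2) K) * hE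
    · simp only [hΨdef, hΦdef, AlgHom.comp_apply, AlgHom.id_apply, aeval_X,
        Matrix.cons_val_zero, Matrix.cons_val_one, Matrix.head_cons, Fin.zero_eta, Fin.mk_one, map_add, map_mul,
        aeval_C, algebraMap_eq, Fin.isValue]
      linear_combination (X 1 : MvPolynomial (Fin 2) K) * hE
  have hinj : Function.Injective ⇑Ψ := by
    intro x y hxy
    have hx := DFunLike.congr_fun hΦΨ x
    have hy := DFunLike.congr_fun hΦΨ y
    simp only [AlgHom.comp_apply, AlgHom.id_apply] at hx hy
    rw [← hx, ← hy, hxy]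
  -- the rotation ρ and the diagonal map D
  obtain ⟨ρ, hρdef⟩ : ∃ ρ : MvPolynomial (Fin 2) K →ₐ[K] MvPolynomial (Fin 2) K,
      ρ = (σt δ).comp (σs δ) := ⟨_, rfl⟩
  obtain ⟨D, hDdef⟩ : ∃ D : MvPolynomial (Fin 2) K →ₐ[K] MvPolynomial (Fin 2) K,
      D = aeval ![C (μ ^ 2) * X 0, C (ν ^ 2) * X 1] := ⟨_, rfl⟩
  have hcomp : ρ.comp Ψ = Ψ.comp D := by
    apply MvPolynomial.algHom_ext
    intro i
    fin_cases i
    · simp only [hΨdef, hρdef, hDdef, AlgHom.comp_apply, aeval_X, σs, σt,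
        Matrix.cons_val_zero, Matrix.cons_val_one, Matrix.head_cons, Fin.zero_eta, Fin.mk_one, map_add, map_mul,
        map_neg, map_pow, aeval_C, algebraMap_eq, Fin.isValue]
      linear_combination (-(X 0 : MvPolynomial (Fin 2) K) - (C μ + C δ) * X 1) * hμC
    · simp only [hΨdef, hρdef, hDdef, AlgHom.comp_apply, aeval_X, σs, σt,
        Matrix.cons_val_zero, Matrix.cons_val_one, Matrix.head_cons, Fin.zero_eta, Fin.mk_one, map_add, map_mul,
        map_neg, map_pow, aeval_C, algebraMap_eq, Fin.isValue]
      linear_combination (-(X 0 : MvPolynomial (Fin 2) K) - (C ν + C δ) * X 1) * hνC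
  obtain ⟨g, hgdef⟩ : ∃ g : MvPolynomial (Fin 2) K, g = Φ F := ⟨_, rfl⟩
  have hΨg : Ψ g = F := by
    have := DFunLike.congr_fun hΨΦ F
    simpa [hgdef] using this
  have hρF : ρ F = F := by rw [hρdef, AlgHom.comp_apply, hF]
  have hDg : D g = g := by
    have h1 := DFunLike.congr_fun hcomp g
    simp only [AlgHom.comp_apply] at h1
    rw [hΨg, hρF] at h1
    exact hinj (h1.symm.trans hΨg.symm)
  -- support of g is diagonal
  have hdiag : ∀ d ∈ g.support, (d : Fin 2 →₀ ℕ) 0 = d 1 := by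
    intro d hd
    have hc : coeff d g ≠ 0 := mem_support_iff.mp hd
    have h1 := coeff_diag (μ ^ 2) (ν ^ 2) g d
    rw [← hDdef, hDg] at h1
    have h2 : ((μ ^ 2) ^ d 0 * (ν ^ 2) ^ d 1 - 1) * coeff d g = 0 := by
      linear_combination -h1
    have hone : μ ^ (2 * d 0) * ν ^ (2 * d 1) = 1 := by
      rcases mul_eq_zero.mp h2 with h | h
      · rw [pow_mul, pow_mul]; exact sub_eq_zero.mp h
      · exact absurd h hc
    by_contra hne
    rcases Nat.lt_or_ge (d 0) (d 1) with hlt | hge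
    · have hΔ : d 1 = d 0 + (d 1 - d 0) ∧ 1 ≤ d 1 - d 0 := by omega
      set Δ := d 1 - d 0
      have hν1 : ν ^ (2 * Δ) = 1 := by
        calc ν ^ (2 * Δ) = (μ ^ (2 * d 0) * ν ^ (2 * d 0)) * ν ^ (2 * Δ) := by
              rw [hμν, one_mul]
          _ = μ ^ (2 * d 0) * ν ^ (2 * d 0 + 2 * Δ) := by rw [mul_assoc, ← pow_add]
          _ = μ ^ (2 * d 0) * ν ^ (2 * d 1) := by rw [← mul_add, ← hΔ.1]
          _ = 1 := hone
      have hμ1 : μ ^ (2 * Δ) = 1 := by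
        have h := hμν (2 * Δ)
        rwa [hν1, mul_one] at h
      exact hlam Δ hΔ.2 hμ1
    · have hlt : d 1 < d 0 := by omega
      have hΔ : d 0 = d 1 + (d 0 - d 1) ∧ 1 ≤ d 0 - d 1 := by omega
      set Δ := d 0 - d 1
      have hμ1 : μ ^ (2 * Δ) = 1 := by
        calc μ ^ (2 * Δ) = μ ^ (2 * Δ) * (μ ^ (2 * d 1) * ν ^ (2 * d 1)) := by
              rw [hμν, mul_one]
          _ = μ ^ (2 * Δ + 2 * d 1) * ν ^ (2 * d 1) := by rw [← mul_assoc, ← pow_add]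
          _ = μ ^ (2 * d 0) * ν ^ (2 * d 1) := by
              rw [show 2 * Δ + 2 * d 1 = 2 * (d 1 + Δ) by ring, ← hΔ.1]
          _ = 1 := hone
      exact hlam Δ hΔ.2 hμ1
  -- hence g lies in the subalgebra generated by X 0 * X 1
  have hg_mem : g ∈ Algebra.adjoin K ({X 0 * X 1} : Set (MvPolynomial (Fin 2) K)) := by
    have hsum : (∑ d ∈ g.support, monomial d (coeff d g))
        ∈ Algebra.adjoin K ({X 0 * X 1} : Set (MvPolynomial (Fin 2) K)) := by
      refine Subalgebra.sum_mem _ (fun d hd => ?_)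
      have hdd := hdiag d hd
      have heq : (monomial d (coeff d g) : MvPolynomial (Fin 2) K)
          = C (coeff d g) * (X 0 * X 1) ^ d 1 := by
        rw [monomial_fin2, hdd, mul_pow]; ring
      rw [heq, ← algebraMap_eq]
      exact mul_mem (Subalgebra.algebraMap_mem _ _)
        (pow_mem (Algebra.subset_adjoin (Set.mem_singleton _)) _)
    rwa [support_sum_monomial_coeff] at hsum
  -- push through Ψ
  have hΨxy : Ψ (X 0 * X 1) = X 0 ^ 2 + C δ * (X 0 * X 1) + X 1 ^ 2 := by
    simp only [hΨdef, map_mul, aeval_X, Matrix.cons_val_zero, Matrix.cons_val_one,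
      Matrix.head_cons, Fin.zero_eta, Fin.mk_one, Fin.isValue]
    linear_combination (X 0 * X 1 : MvPolynomial (Fin 2) K) * haddC
      + (X 1 ^ 2 : MvPolynomial (Fin 2) K) * hmulC
  have hmem : F ∈ Subalgebra.map Ψ (Algebra.adjoin K ({X 0 * X 1} :
      Set (MvPolynomial (Fin 2) K))) := ⟨g, hg_mem, hΨg⟩
  rwa [AlgHom.map_adjoin, Set.image_singleton, hΨxy] at hmem

lemma hard_core {k K : Type*} [CommRing k] [IsDomain k] [Field K] [IsAlgClosed K]
    (ι : k →+* K) (hι : Function.Injective ι) (δ : k) (hunit : IsUnit (4 - δ ^ 2))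
    (hqn : ∀ n : ℕ, 1 ≤ n → qn δ n ≠ 0) (f : MvPolynomial (Fin 2) k)
    (hs : σs δ f = f) (ht : σt δ f = f) :
    f ∈ Algebra.adjoin k
      ({X 0 ^ 2 + C δ * (X 0 * X 1) + X 1 ^ 2} : Set (MvPolynomial (Fin 2) k)) := by
  have h4 : (4 : K) - (ι δ) ^ 2 ≠ 0 := by
    have hu := hunit.map ι
    have he : ι (4 - δ ^ 2) = 4 - (ι δ) ^ 2 := by
      rw [map_sub, map_pow, map_ofNat]
    rw [he] at hu
    exact hu.ne_zero
  have hq' : ∀ n : ℕ, 1 ≤ n → qn (ι δ) n ≠ 0 := fun n hn h =>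
    hqn n hn (hι (by rw [qn_map ι δ n, h, map_zero]))
  have hF : σt (ι δ) (σs (ι δ) (MvPolynomial.map ι f)) = MvPolynomial.map ι f := by
    rw [← map_σs, hs, ← map_σt, ht]
  have hmem := core (ι δ) h4 hq' (MvPolynomial.map ι f) hF
  rw [Algebra.adjoin_singleton_eq_range_aeval] at hmem
  obtain ⟨p, hp⟩ := hmem
  exact descent ι hι δ p.natDegree p f le_rfl hp.symm

/-- If `k` is an integral domain, `4 − δ²` is invertible and `[n] ≠ 0` for all `n ≥ 1`
(a faithful representation of the infinite dihedral group), then the subring of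
`k[αs, αt]` of polynomials fixed by both `σs` and `σt` is exactly the `k`-subalgebra
generated by `z = αs² + δ·αs·αt + αt²`. -/
theorem dihedral_invariants_infinite {k : Type*} [CommRing k] [IsDomain k] (δ : k)
    (hunit : IsUnit (4 - δ ^ 2)) (hqn : ∀ n : ℕ, 1 ≤ n → qn δ n ≠ 0) :
    ∀ f : MvPolynomial (Fin 2) k,
      (σs δ f = f ∧ σt δ f = f) ↔
        f ∈ Algebra.adjoin k
          ({X 0 ^ 2 + C δ * (X 0 * X 1) + X 1 ^ 2} : Set (MvPolynomial (Fin 2) k)) := by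
  intro f
  constructor
  · rintro ⟨hs, ht⟩
    have hι : Function.Injective
        ⇑((algebraMap (FractionRing k) (AlgebraicClosure (FractionRing k))).comp
          (algebraMap k (FractionRing k))) := by
      rw [RingHom.coe_comp]
      exact (algebraMap (FractionRing k) (AlgebraicClosure (FractionRing k))).injective.comp
        (IsFractionRing.injective k (FractionRing k))
    exact hard_core _ hι δ hunit hqn f hs ht
  · intro hf
    constructor
    · refine Algebra.adjoin_induction (fun x hx => ?_) (fun r => ?_)
        (fun x y _ _ hx hy => ?_) (fun x y _ _ hx hy => ?_) hf
      · rw [Set.mem_singleton_iff] at hx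
        rw [hx]
        exact σs_fix_z δ
      · exact (σs δ).commutes r
      · rw [map_add, hx, hy]
      · rw [map_mul, hx, hy]
    · refine Algebra.adjoin_induction (fun x hx => ?_) (fun r => ?_)
        (fun x y _ _ hx hy => ?_) (fun x y _ _ hx hy => ?_) hf
      · rw [Set.mem_singleton_iff] at hx
        rw [hx]
        exact σt_fix_z δ
      · exact (σt δ).commutes r
      · rw [map_add, hx, hy]
      · rw [map_mul, hx, hy]
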